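/- Theorem 1 (soundness of the IMDP abstraction). For every abstract state ŝ ∈ Ŝ, every concrete state s ∈ ŝ, and every time horizon k ∈ ℕ, the k-step failure probability of the concrete model is bounded by the abstract value: p(s,k) ≤ v̂(ŝ,k). -/
import Mathlib


/-- Theorem 1 (soundness of the IMDP abstraction): for every abstract state `sh`,
every concrete state `s ∈ sh` and every horizon `k`, the `k`-step failure
probability of the concrete RL execution model is bounded by the abstract value
computed on the IMDP abstraction. -/
theorem imdp_abstraction_sound
    {S : Type*} {A : Type*} [Fintype A] [Nonempty A]
    (E : S → A → S) (π : S → A → ℝ) (F : Set S)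
    (hπ_nonneg : ∀ s a, 0 ≤ π s a)
    (hπ_sum : ∀ s, ∑ a, π s a = 1)
    -- the k-step failure probability of the concrete model
    (p : S → ℕ → ℝ)
    (hp_fail : ∀ s k, s ∈ F → p s k = 1)
    (hp_zero : ∀ s, s ∉ F → p s 0 = 0)
    (hp_succ : ∀ s k, s ∉ F → p s (k + 1) = ∑ a, π s a * p (E s a) k)
    -- the IMDP abstraction: a finite set of abstract states, each a subset of S
    {Shat : Type*} [Fintype Shat]
    (conc : Shat → Set S)
    -- each abstract state is equipped with a finite nonempty family of pieces
    (J : Shat → Type*) [∀ sh, Fintype (J sh)] [∀ sh, Nonempty (J sh)]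
    (piece : (sh : Shat) → J sh → Set S)
    (hcover : ∀ sh, conc sh ⊆ ⋃ j, piece sh j)
    -- environment abstraction
    (Ehat : (sh : Shat) → J sh → A → Shat)
    (hEhat : ∀ sh (j : J sh) (a : A) (s : S), s ∈ piece sh j → E s a ∈ conc (Ehat sh j a))
    -- policy upper bounds
    (πU : (sh : Shat) → J sh → A → ℝ)
    (hπU_nonneg : ∀ sh (j : J sh) (a : A), 0 ≤ πU sh j a)
    (hπU : ∀ sh (j : J sh) (a : A) (s : S), s ∈ piece sh j → π s a ≤ πU sh j a)
    -- fail labelling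
    (failLab : Shat → Prop)
    (hfail : ∀ sh, (conc sh ∩ F).Nonempty → failLab sh)
    -- the abstract value
    (vhat : Shat → ℕ → ℝ)
    (hv_fail : ∀ sh k, failLab sh → vhat sh k = 1)
    (hv_zero : ∀ sh, ¬ failLab sh → vhat sh 0 = 0)
    (hv_succ : ∀ sh k, ¬ failLab sh →
      vhat sh (k + 1) =
        Finset.univ.sup' Finset.univ_nonempty
          (fun j : J sh => ∑ a, πU sh j a * vhat (Ehat sh j a) k)) :
    ∀ (sh : Shat) (s : S), s ∈ conc sh → ∀ k : ℕ, p s k ≤ vhat sh k := by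

  -- auxiliary: 0 ≤ p s k and p s k ≤ 1
  have hbnd : ∀ k (s : S), 0 ≤ p s k ∧ p s k ≤ 1 := by
    intro k
    induction k with
    | zero =>
      intro s
      by_cases hs : s ∈ F
      · rw [hp_fail s 0 hs]; norm_num
      · rw [hp_zero s hs]; norm_num
    | succ k ih =>
      intro s
      by_cases hs : s ∈ F
      · rw [hp_fail s (k+1) hs]; norm_num
      · rw [hp_succ s k hs]
        constructor
        · apply Finset.sum_nonneg
          intro a _
          exact mul_nonneg (hπ_nonneg s a) (ih (E s a)).1
        · calc ∑ a, π s a * p (E s a) k ≤ ∑ a, π s a * 1 := by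
                apply Finset.sum_le_sum
                intro a _
                exact mul_le_mul_of_nonneg_left (ih (E s a)).2 (hπ_nonneg s a)
            _ = 1 := by simp [hπ_sum s]
  intro sh s hs k
  induction k generalizing sh s with
  | zero =>
    by_cases hf : failLab sh
    · rw [hv_fail sh 0 hf]; exact (hbnd 0 s).2
    · rw [hv_zero sh hf]
      have hsF : s ∉ F := fun h => hf (hfail sh ⟨s, hs, h⟩)
      rw [hp_zero s hsF]
  | succ k ih =>
    by_cases hf : failLab sh
    · rw [hv_fail sh (k+1) hf]; exact (hbnd (k+1) s).2
    · have hsF : s ∉ F := fun h => hf (hfail sh ⟨s, hs, h⟩)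
      rw [hp_succ s k hsF, hv_succ sh k hf]
      obtain ⟨j, hj⟩ := Set.mem_iUnion.mp (hcover sh hs)
      refine le_trans ?_ (Finset.le_sup' _ (Finset.mem_univ j))
      apply Finset.sum_le_sum
      intro a _
      exact mul_le_mul (hπU sh j a s hj) (ih (Ehat sh j a) (E s a) (hEhat sh j a s hj))
        (hbnd k (E s a)).1 (hπU_nonneg sh j a)
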